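/- Let η ∈ (0,1), λ ∈ (−1,1) and k ∈ ℝ, and define for t ≥ 0 the function ℐ(t) = ((1+η²)/(4η))² · exp(−4(k + 2ηt/(1+η))) · (e^{4k} + e^{4ηt/(1+η)} − 1) · ( e^{4(k + ηt/(1+η))} − (e^{4k} − 1)·cosh²(2ηλt/(1+η)) ). Then ℐ(t) converges to ((1+η²)/(4η))² as t → ∞. Consequently the asymptotic logarithmic negativity equals max{0, −(1/2)·log₂((1+η²)²/(4η²))} for all dissipative couplings |λ| < 1. -/

import Mathlib

open Filter Real


/-- For `|λ| < 1`, the symplectic invariant `ℐ(t)` tends to `((1+η²)/(4η))²` as `t → ∞`,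
and consequently the logarithmic negativity `E(t) = max{0, −(1/2)·log₂(4ℐ(t))}`
tends to `max{0, −(1/2)·log₂((1+η²)²/(4η²))}`. -/
theorem asymptotic_entanglement_subcritical (η lam k : ℝ)
    (hη : η ∈ Set.Ioo (0 : ℝ) 1) (hlam : lam ∈ Set.Ioo (-1 : ℝ) 1)
    (I : ℝ → ℝ)
    (hI : ∀ t : ℝ, I t =
      ((1 + η ^ 2) / (4 * η)) ^ 2 * Real.exp (-4 * (k + 2 * η * t / (1 + η))) *
        (Real.exp (4 * k) + Real.exp (4 * η * t / (1 + η)) - 1) *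
        (Real.exp (4 * (k + η * t / (1 + η))) -
          (Real.exp (4 * k) - 1) * Real.cosh (2 * η * lam * t / (1 + η)) ^ 2)) :
    Filter.Tendsto I Filter.atTop (nhds (((1 + η ^ 2) / (4 * η)) ^ 2)) ∧
    Filter.Tendsto (fun t => max 0 (-(1 / 2) * Real.logb 2 (4 * I t))) Filter.atTop
      (nhds (max 0 (-(1 / 2) * Real.logb 2 ((1 + η ^ 2) ^ 2 / (4 * η ^ 2))))) := by
  obtain ⟨hη0, hη1⟩ := hη
  obtain ⟨hl1, hl2⟩ := hlam
  have h1η : (0:ℝ) < 1 + η := by linarith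
  set a : ℝ := η / (1 + η) with ha
  have ha0 : 0 < a := div_pos hη0 h1η
  set C : ℝ := (1 + η ^ 2) / (4 * η) with hC
  have hC0 : 0 < C := div_pos (by positivity) (by positivity)
  -- rewrite I
  have hrw : ∀ t : ℝ, I t = C ^ 2 *
      ((1 + (Real.exp (4*k) - 1) * Real.exp (-(4*a*t))) *
       (1 - (1 - Real.exp (-(4*k))) *
          (Real.exp (-(2*a*t)) * Real.cosh (2*lam*(a*t)))^2)) := by
    intro t
    rw [hI t]
    have e1 : -4 * (k + 2 * η * t / (1 + η)) = -(4*k) + -(4*a*t) + -(4*a*t) := by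
      rw [ha]; field_simp; try ring
    have e2 : 4 * η * t / (1 + η) = 4*a*t := by rw [ha]; field_simp; try ring
    have e3 : 4 * (k + η * t / (1 + η)) = 4*k + 4*a*t := by rw [ha]; field_simp; try ring
    have e4 : 2 * η * lam * t / (1 + η) = 2*lam*(a*t) := by rw [ha]; field_simp; try ring
    rw [e1, e2, e3, e4, Real.exp_add, Real.exp_add, Real.exp_add, Real.exp_neg (4*k),
      Real.exp_neg (4*a*t), Real.exp_neg (2*a*t)]
    have h2 : Real.exp (4*a*t) = Real.exp (2*a*t) * Real.exp (2*a*t) := by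
      rw [show (4:ℝ)*a*t = 2*a*t+2*a*t by ring, Real.exp_add]
    rw [h2]
    have hek := Real.exp_pos (4*k)
    have het := Real.exp_pos (2*a*t)
    field_simp
    ring
  -- basic limits
  have hexp0 : ∀ c : ℝ, c < 0 → Tendsto (fun t : ℝ => Real.exp (c * t)) atTop (nhds 0) := by
    intro c hc
    have : Tendsto (fun t : ℝ => c * t) atTop atBot :=
      (tendsto_id (α := ℝ)).const_mul_atTop_of_neg hc
    exact Real.tendsto_exp_atBot.comp this
  have l1 : Tendsto (fun t : ℝ => Real.exp (-(4*a*t))) atTop (nhds 0) := by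
    have := hexp0 (-(4*a)) (by linarith)
    convert this using 2 with t
    ring
  have l2 : Tendsto (fun t : ℝ => Real.exp (-(2*a*t)) * Real.cosh (2*lam*(a*t))) atTop (nhds 0) := by
    have heq : ∀ t : ℝ, Real.exp (-(2*a*t)) * Real.cosh (2*lam*(a*t)) =
        (Real.exp ((2*a*(lam-1))*t) + Real.exp ((-(2*a*(lam+1)))*t)) / 2 := by
      intro t
      rw [Real.cosh_eq,
        show 2*a*(lam-1)*t = 2*lam*(a*t) + -(2*a*t) by ring,
        show -(2*a*(lam+1))*t = -(2*lam*(a*t)) + -(2*a*t) by ring,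
        Real.exp_add, Real.exp_add]
      ring
    have l2a := hexp0 (2*a*(lam-1)) (by nlinarith)
    have l2b := hexp0 (-(2*a*(lam+1))) (by nlinarith)
    have : Tendsto (fun t : ℝ => (Real.exp ((2*a*(lam-1))*t) + Real.exp ((-(2*a*(lam+1)))*t)) / 2)
        atTop (nhds ((0+0)/2)) := (l2a.add l2b).div_const 2
    simp only [heq]
    simpa using this
  have key : Tendsto I atTop (nhds (C ^ 2)) := by
    have : Tendsto (fun t : ℝ => C ^ 2 *
        ((1 + (Real.exp (4*k) - 1) * Real.exp (-(4*a*t))) *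
         (1 - (1 - Real.exp (-(4*k))) *
            (Real.exp (-(2*a*t)) * Real.cosh (2*lam*(a*t)))^2))) atTop
        (nhds (C ^ 2 * ((1 + (Real.exp (4*k) - 1) * 0) *
          (1 - (1 - Real.exp (-(4*k))) * 0 ^ 2)))) := by
      exact tendsto_const_nhds.mul
        (((tendsto_const_nhds.add (tendsto_const_nhds.mul l1)).mul
          (tendsto_const_nhds.sub (tendsto_const_nhds.mul (l2.pow 2)))))
    have h := this
    norm_num at h
    exact (Filter.tendsto_congr fun t => (hrw t).symm).mp h
  refine ⟨key, ?_⟩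
  -- second part
  have h4C : (4:ℝ) * C ^ 2 = (1 + η ^ 2) ^ 2 / (4 * η ^ 2) := by
    rw [hC]; field_simp
  have hcont : Tendsto (fun x : ℝ => max 0 (-(1/2) * Real.logb 2 (4 * x))) (nhds (C^2))
      (nhds (max 0 (-(1/2) * Real.logb 2 (4 * C^2)))) := by
    apply Filter.Tendsto.max tendsto_const_nhds
    apply Filter.Tendsto.const_mul
    have h1 : ContinuousAt (Real.logb 2) (4 * C^2) := Real.continuousAt_logb (by positivity)
    have h2 : ContinuousAt (fun x : ℝ => 4 * x) (C^2) := by fun_prop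
    exact (h1.comp h2).tendsto
  rw [← h4C]
  exact hcont.comp key
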